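/- (Sufficiency under a preimage condition) Assume that the preimage under B2* of range(B1*) equals the preimage under B2* of the closure of range(B1*), i.e. for every h5 ∈ H5, if B2* h5 lies in the closure of range(B1*) then B2* h5 ∈ range(B1*). If moreover (a) there exists C > 0 with ‖A1* h4‖ ≤ C ‖B1* h4‖ for all h4 ∈ H4, and (b) for all h4 ∈ H4, h5 ∈ H5, B1* h4 + B2* h5 = 0 implies A1* h4 + A2* h5 = 0, then for every h1 ∈ H1 and every ε > 0 there exists h2 ∈ H2 such that A1 h1 = B1 h2 and ‖A2 h1 − B2 h2‖ ≤ ε. -/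

import Mathlib

open ContinuousLinearMap RealInnerProductSpace

set_option maxHeartbeats 1000000 in
/-- Sufficiency of the necessary conditions under the preimage condition
`(B2*)⁻¹(R(B1*)) = (B2*)⁻¹(closure R(B1*))`. -/
theorem sufficiency_under_preimage_condition
    {H1 H2 H4 H5 : Type*}
    [NormedAddCommGroup H1] [InnerProductSpace ℝ H1] [CompleteSpace H1]
    [NormedAddCommGroup H2] [InnerProductSpace ℝ H2] [CompleteSpace H2]
    [NormedAddCommGroup H4] [InnerProductSpace ℝ H4] [CompleteSpace H4]
    [NormedAddCommGroup H5] [InnerProductSpace ℝ H5] [CompleteSpace H5]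
    (A1 : H1 →L[ℝ] H4) (A2 : H1 →L[ℝ] H5)
    (B1 : H2 →L[ℝ] H4) (B2 : H2 →L[ℝ] H5)
    (hpre : ∀ h5 : H5, adjoint B2 h5 ∈ closure (Set.range (adjoint B1)) →
      adjoint B2 h5 ∈ Set.range (adjoint B1))
    (ha : ∃ C : ℝ, 0 < C ∧ ∀ h4 : H4, ‖adjoint A1 h4‖ ≤ C * ‖adjoint B1 h4‖)
    (hb : ∀ (h4 : H4) (h5 : H5), adjoint B1 h4 + adjoint B2 h5 = 0 →
      adjoint A1 h4 + adjoint A2 h5 = 0) :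
    ∀ h1 : H1, ∀ ε : ℝ, 0 < ε →
      ∃ h2 : H2, A1 h1 = B1 h2 ∧ ‖A2 h1 - B2 h2‖ ≤ ε := by
  obtain ⟨C, hC, hCle⟩ := ha
  intro h1 ε hε
  -- well-definedness of A1* on values of B1*
  have hwd : ∀ a b : H4, adjoint B1 a = adjoint B1 b → adjoint A1 a = adjoint A1 b := by
    intro a b hab
    have h := hCle (a - b)
    rw [map_sub, map_sub, hab, sub_self, norm_zero, mul_zero] at h
    have h0 := norm_le_zero_iff.mp h
    rw [sub_eq_zero] at h0
    exact h0
  set R : Submodule ℝ H2 := LinearMap.range (adjoint B1).toLinearMap with hR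
  have hsec : ∀ x : R, ∃ y : H4, adjoint B1 y = (x : H2) := fun x => x.2
  choose sec hsec' using hsec
  have hsecwd : ∀ (x : R) (y : H4), adjoint B1 y = (x : H2) →
      adjoint A1 (sec x) = adjoint A1 y := by
    intro x y hy
    exact hwd _ _ (by rw [hsec' x, hy])
  -- the functional B1* h4 ↦ ⟪A1* h4, h1⟫ on R
  set f0 : R →ₗ[ℝ] ℝ :=
    { toFun := fun x => ⟪adjoint A1 (sec x), h1⟫
      map_add' := by
        intro x y
        have h : adjoint A1 (sec (x + y)) = adjoint A1 (sec x) + adjoint A1 (sec y) := by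
          rw [← map_add]
          exact hsecwd (x + y) (sec x + sec y)
            (by rw [map_add, hsec' x, hsec' y]; rfl)
        simp [h, inner_add_left]
      map_smul' := by
        intro c x
        have h : adjoint A1 (sec (c • x)) = c • adjoint A1 (sec x) := by
          rw [← map_smul]
          exact hsecwd (c • x) (c • sec x)
            (by rw [map_smul, hsec' x]; rfl)
        simp [h, inner_smul_left] } with hf0
  have hf0app : ∀ x : R, f0 x = ⟪adjoint A1 (sec x), h1⟫ := fun _ => rfl
  have hbound : ∀ x : R, ‖f0 x‖ ≤ (C * ‖h1‖) * ‖x‖ := by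
    intro x
    calc ‖f0 x‖ ≤ ‖adjoint A1 (sec x)‖ * ‖h1‖ := norm_inner_le_norm _ _
      _ ≤ (C * ‖adjoint B1 (sec x)‖) * ‖h1‖ := by
          have h := hCle (sec x)
          have h1n : (0:ℝ) ≤ ‖h1‖ := norm_nonneg _
          nlinarith [norm_nonneg (adjoint A1 (sec x))]
      _ = (C * ‖h1‖) * ‖x‖ := by rw [hsec' x, ← Submodule.norm_coe x]; ring
  set f := f0.mkContinuous (C * ‖h1‖) hbound with hf
  obtain ⟨g, hg, -⟩ := exists_extension_norm_eq R f
  set h2a := (InnerProductSpace.toDual ℝ H2).symm g with hh2a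
  have hg' : ∀ v : H2, ⟪h2a, v⟫ = g v := by
    intro v
    rw [hh2a]
    exact InnerProductSpace.toDual_symm_apply
  -- key evaluation
  have hkey : ∀ v : H4, g (adjoint B1 v) = ⟪adjoint A1 v, h1⟫ := by
    intro v
    have hv : adjoint B1 v ∈ R := ⟨v, rfl⟩
    have h1g := hg ⟨adjoint B1 v, hv⟩
    rw [hf, f0.mkContinuous_apply, hf0app] at h1g
    rw [hsecwd ⟨adjoint B1 v, hv⟩ v rfl] at h1g
    exact h1g
  -- solve the first equation
  have hB1 : B1 h2a = A1 h1 := by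
    apply ext_inner_right ℝ
    intro v
    calc ⟪B1 h2a, v⟫ = ⟪h2a, adjoint B1 v⟫ := (adjoint_inner_right B1 h2a v).symm
      _ = g (adjoint B1 v) := hg' _
      _ = ⟪adjoint A1 v, h1⟫ := hkey v
      _ = ⟪v, A1 h1⟫ := adjoint_inner_left A1 h1 v
      _ = ⟪A1 h1, v⟫ := real_inner_comm _ _
  -- second part: A2 h1 - B2 h2a lies in the closure of B2 (ker B1)
  set M : Submodule ℝ H5 := Submodule.map B2.toLinearMap (LinearMap.ker B1.toLinearMap) with hM
  set x : H5 := A2 h1 - B2 h2a with hx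
  have hRorth : ((LinearMap.ker B1.toLinearMap : Submodule ℝ H2)ᗮ : Set H2)
      = closure (Set.range (adjoint B1)) := by
    have h1' : Rᗮ = LinearMap.ker B1.toLinearMap := by
      ext k
      simp only [Submodule.mem_orthogonal, LinearMap.mem_ker]
      constructor
      · intro h
        have h0 := h (adjoint B1 (B1 k)) ⟨B1 k, rfl⟩
        rw [adjoint_inner_left] at h0
        exact inner_self_eq_zero.mp h0
      · intro h u hu
        obtain ⟨v, rfl⟩ := hu
        simp only [ContinuousLinearMap.coe_coe] at h ⊢
        rw [adjoint_inner_left, h, inner_zero_right]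
    have h2' : (LinearMap.ker B1.toLinearMap : Submodule ℝ H2)ᗮ = R.topologicalClosure := by
      rw [← h1', Submodule.orthogonal_orthogonal_eq_closure]
    rw [h2', Submodule.topologicalClosure_coe]
    congr 1
  have hxM : x ∈ Mᗮᗮ := by
    rw [Submodule.mem_orthogonal]
    intro h5 hh5
    -- h5 ⊥ B2 (ker B1), so B2* h5 ∈ (ker B1)ᗮ = closure range B1*
    have hmemclos : adjoint B2 h5 ∈ closure (Set.range (adjoint B1)) := by
      rw [← hRorth]
      rw [SetLike.mem_coe, Submodule.mem_orthogonal]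
      intro k hk
      have hBk : B2 k ∈ M := Submodule.mem_map_of_mem hk
      have h0 : ⟪B2 k, h5⟫ = (0:ℝ) := (Submodule.mem_orthogonal M h5).mp hh5 _ hBk
      rw [adjoint_inner_right]
      exact h0
    obtain ⟨h4, hh4⟩ := hpre h5 hmemclos
    have hzero : adjoint B1 (-h4) + adjoint B2 h5 = 0 := by
      rw [map_neg, hh4]; simp
    have hA := hb (-h4) h5 hzero
    rw [map_neg] at hA
    have hA2 : adjoint A2 h5 = adjoint A1 h4 := by
      rw [neg_add_eq_zero] at hA
      exact hA.symm
    calc ⟪h5, x⟫ = ⟪h5, A2 h1⟫ - ⟪h5, B2 h2a⟫ := by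
          rw [hx, inner_sub_right]
      _ = ⟪adjoint A2 h5, h1⟫ - ⟪adjoint B2 h5, h2a⟫ := by
          rw [adjoint_inner_left, adjoint_inner_left]
      _ = ⟪adjoint A1 h4, h1⟫ - ⟪adjoint B1 h4, h2a⟫ := by
          rw [hA2, hh4]
      _ = ⟪h4, A1 h1⟫ - ⟪h4, B1 h2a⟫ := by
          rw [adjoint_inner_left, adjoint_inner_left]
      _ = 0 := by rw [hB1, sub_self]
  have hxclos : x ∈ closure (M : Set H5) := by
    have h := (Submodule.orthogonal_orthogonal_eq_closure (K := M)) ▸ hxM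
    rw [← Submodule.topologicalClosure_coe]
    exact h
  obtain ⟨y, hyM, hdist⟩ := Metric.mem_closure_iff.mp hxclos ε hε
  obtain ⟨k, hk, rfl⟩ := hyM
  refine ⟨h2a + k, ?_, ?_⟩
  · rw [map_add, hB1]
    have hk0 : B1 k = 0 := hk
    rw [hk0, add_zero]
  · have heq : A2 h1 - B2 (h2a + k) = x - B2 k := by
      rw [map_add, hx]; abel
    rw [heq]
    have hd : dist x (B2 k) = ‖x - B2 k‖ := dist_eq_norm _ _
    rw [← hd]
    exact le_of_lt hdist
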